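/- arXiv:1906.07567 — 2 statements merged into one kernel-verified Lean document; each statement's English description precedes it below -/
import Mathlib

section
/- Under a triangle-like inequality of the form c_{ab} ≤ c_{ac} + c_{dc} + c_{db} for all indices, in a 3×3 assignment problem where the diagonal assignment is optimal with cost c* = c_{11}+c_{22}+c_{33} = 3, and the competitive protocol (with greedy conflicts as described) produces the cyclic assignment with cost c = c_{12}+c_{23}+c_{31}, then c < 9, i.e., c < 3·c*. -/
/-- 3×3 competitive assignment bound: under the four-index triangle-like
inequality, optimality of the diagonal assignment with cost 3, and the
greedy-conflict conditions, the cyclic competitive assignment has cost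
strictly less than 9, i.e. less than 3 times the optimum. -/
theorem three_by_three_competitive_bound (c : Fin 3 → Fin 3 → ℝ)
    (hpos : ∀ i j, 0 ≤ c i j)
    (htri : ∀ a b x d : Fin 3, c a b ≤ c a x + c d x + c d b)
    (hval : c 0 0 + c 1 1 + c 2 2 = 3)
    (hopt : ∀ σ : Equiv.Perm (Fin 3), σ ≠ 1 →
      c 0 0 + c 1 1 + c 2 2 < c 0 (σ 0) + c 1 (σ 1) + c 2 (σ 2))
    (hg1 : c 0 1 < c 0 0) (hg2 : c 1 2 < c 1 1) (hg3 : c 2 2 < c 2 0) :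
    c 0 1 + c 1 2 + c 2 0 < 9 := by
  have h1 : c 2 0 ≤ c 2 2 + c 1 2 + c 1 0 := htri 2 0 2 1
  have h2 : c 1 0 ≤ c 1 1 + c 0 1 + c 0 0 := htri 1 0 1 0
  have h22 : 0 ≤ c 2 2 := hpos 2 2
  linarith
end

section
/- Let (x_{ij}) be a feasible solution of the n×n linear assignment problem (each row and column sums to 1, x_{ij} ∈ {0,1}) produced by an ε-complementary-slackness terminating auction: there exist bids B(i,j) ≥ 0 such that for each vehicle i assigned to customer j_i, -c_{i j_i} - B(i, j_i) ≥ max_j (-c_{ij} - B(i,j)) - ε, and each customer's bid is won by exactly one vehicle. Then the total cost Σ_i c_{i j_i} is within n·ε of the optimal assignment cost: Σ_i c_{i j_i} ≤ OPT + n·ε, where OPT = min over permutations σ of Σ_i c_{i σ(i)}. -/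
/-- ε-complementary slackness implies near-optimality: if each vehicle `i` is
assigned to customer `σ i` within `ε` of maximizing its net reward
`-c_{ij} - B(i,j)` (with nonnegative bids), then the total assignment cost is
within `n·ε` of the optimal assignment cost. -/
theorem eps_cs_near_optimal (n : ℕ) (ε : ℝ) (hε : 0 ≤ ε)
    (c : Fin n → Fin n → ℝ) (B : Fin n → Fin n → ℝ)
    (hB : ∀ i j, 0 ≤ B i j)
    (σ : Equiv.Perm (Fin n))
    (hwin : ∀ j : Fin n, ∀ i : Fin n, B i j ≤ B (σ.symm j) j)
    (hcs : ∀ i j : Fin n, -c i (σ i) - B i (σ i) ≥ -c i j - B i j - ε) :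
    ∀ τ : Equiv.Perm (Fin n),
      ∑ i, c i (σ i) ≤ (∑ i, c i (τ i)) + n * ε := by
  intro τ
  have h1 : ∀ i, c i (σ i) ≤ c i (τ i) + B i (τ i) - B i (σ i) + ε := by
    intro i; have := hcs i (τ i); linarith
  have h2 : ∑ i, B i (τ i) ≤ ∑ i, B i (σ i) := by
    calc ∑ i, B i (τ i) ≤ ∑ i, B (σ.symm (τ i)) (τ i) :=
          Finset.sum_le_sum fun i _ => hwin (τ i) i
      _ = ∑ j, B (σ.symm j) j := (Equiv.sum_comp τ fun j => B (σ.symm j) j)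
      _ = ∑ i, B i (σ i) := by
          rw [← Equiv.sum_comp σ fun j => B (σ.symm j) j]
          simp
  calc ∑ i, c i (σ i) ≤ ∑ i, (c i (τ i) + B i (τ i) - B i (σ i) + ε) :=
        Finset.sum_le_sum fun i _ => h1 i
    _ = (∑ i, c i (τ i)) + ((∑ i, B i (τ i)) - ∑ i, B i (σ i)) + n * ε := by
        simp [Finset.sum_add_distrib, Finset.sum_sub_distrib, Finset.mul_sum]
        ring
    _ ≤ (∑ i, c i (τ i)) + n * ε := by linarith
end
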